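/- Fix c > 0, γ ∈ (0,1), m ≥ 1 an integer, δ > -m. Let τ_n = n − c·n^γ and let k = k(n) be a sequence of integers with m ≤ k(n) and k(n) = o(n^{1−γ}). Then the product ∏_{j=⌈τ_n⌉+1}^{n} ∏_{i=1}^{m} (1 − (k+δ)/(j(2m+δ) − 2m + i − 1)) satisfies: 1 minus this product is asymptotic to c·m·n^{γ−1}·(k+δ)/(2m+δ), i.e., [1 − ∏∏(…)] / (c·m·n^{γ−1}·(k+δ)/(2m+δ)) → 1 as n → ∞. -/

import Mathlib

open Filter Asymptotics

private lemma weier {α : Type*} (s : Finset α) (f : α → ℝ) (h0 : ∀ i ∈ s, 0 ≤ f i)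
    (h1 : ∀ i ∈ s, f i ≤ 1) : 1 - ∑ i ∈ s, f i ≤ ∏ i ∈ s, (1 - f i) := by
  induction s using Finset.cons_induction with
  | empty => simp
  | cons a s ha ih =>
    rw [Finset.sum_cons, Finset.prod_cons]
    have h0' : ∀ i ∈ s, 0 ≤ f i := fun i hi => h0 i (Finset.mem_cons_of_mem hi)
    have h1' : ∀ i ∈ s, f i ≤ 1 := fun i hi => h1 i (Finset.mem_cons_of_mem hi)
    have ihs := ih h0' h1'
    have hs0 : 0 ≤ ∑ i ∈ s, f i := Finset.sum_nonneg h0'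
    have hp0 : (0:ℝ) ≤ ∏ i ∈ s, (1 - f i) :=
      Finset.prod_nonneg fun i hi => by linarith [h1' i hi]
    have ha0 := h0 a (Finset.mem_cons_self a s)
    have ha1 := h1 a (Finset.mem_cons_self a s)
    nlinarith

private lemma weier2 (s t : Finset ℕ) (f : ℕ → ℕ → ℝ)
    (h0 : ∀ j ∈ s, ∀ i ∈ t, 0 ≤ f j i) (h1 : ∀ j ∈ s, ∀ i ∈ t, f j i ≤ 1) :
    1 - ∑ j ∈ s, ∑ i ∈ t, f j i ≤ ∏ j ∈ s, ∏ i ∈ t, (1 - f j i) := by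
  have h := weier (s ×ˢ t) (fun p => f p.1 p.2)
    (fun p hp => by rw [Finset.mem_product] at hp; exact h0 p.1 hp.1 p.2 hp.2)
    (fun p hp => by rw [Finset.mem_product] at hp; exact h1 p.1 hp.1 p.2 hp.2)
  simpa [Finset.sum_product, Finset.prod_product] using h

private lemma prod_le_exp2 (s t : Finset ℕ) (f : ℕ → ℕ → ℝ)
    (h1 : ∀ j ∈ s, ∀ i ∈ t, f j i ≤ 1) :
    ∏ j ∈ s, ∏ i ∈ t, (1 - f j i) ≤ Real.exp (-∑ j ∈ s, ∑ i ∈ t, f j i) := by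
  have h : ∏ p ∈ s ×ˢ t, (1 - f p.1 p.2) ≤ ∏ p ∈ s ×ˢ t, Real.exp (-(f p.1 p.2)) := by
    refine Finset.prod_le_prod (fun p hp => ?_) (fun p hp => Real.one_sub_le_exp_neg _)
    rw [Finset.mem_product] at hp
    linarith [h1 p.1 hp.1 p.2 hp.2]
  have h2 : ∏ p ∈ s ×ˢ t, Real.exp (-(f p.1 p.2)) = Real.exp (-∑ p ∈ s ×ˢ t, f p.1 p.2) := by
    rw [← Real.exp_sum]
    congr 1
    rw [← Finset.sum_neg_distrib]
  calc ∏ j ∈ s, ∏ i ∈ t, (1 - f j i) = ∏ p ∈ s ×ˢ t, (1 - f p.1 p.2) :=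
        (Finset.prod_product' s t fun j i => (1 - f j i)).symm
    _ ≤ Real.exp (-∑ p ∈ s ×ˢ t, f p.1 p.2) := by rw [← h2]; exact h
    _ = Real.exp (-∑ j ∈ s, ∑ i ∈ t, f j i) := by rw [Finset.sum_product' s t f]

private lemma exp_neg_le_quad {S : ℝ} (h0 : 0 ≤ S) (h1 : S ≤ 1) :
    Real.exp (-S) ≤ 1 - S + 3/4 * S^2 := by
  have h := Real.exp_bound (x := -S) (by rwa [abs_neg, abs_of_nonneg h0]) (n := 2) (by norm_num)
  rw [abs_neg, abs_of_nonneg h0] at h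
  have h2 : ∑ i ∈ Finset.range 2, (-S)^i / (Nat.factorial i : ℝ) = 1 - S := by
    simp [Finset.sum_range_succ]
    ring
  rw [h2] at h
  have h3 := (abs_le.1 h).2
  norm_num [Nat.factorial] at h3
  nlinarith

set_option maxHeartbeats 2000000 in
theorem stmt_14 (c γ : ℝ) (hc : 0 < c) (hγ0 : 0 < γ) (hγ1 : γ < 1)
    (m : ℕ) (hm : 1 ≤ m) (δ : ℝ) (hδ : -(m : ℝ) < δ)
    (k : ℕ → ℕ) (hk : ∀ n, m ≤ k n)
    (hko : (fun n : ℕ => (k n : ℝ)) =o[atTop] fun n : ℕ => (n : ℝ) ^ (1 - γ)) :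
    Tendsto (fun n : ℕ =>
        (1 - ∏ j ∈ Finset.Ioc ⌈(n : ℝ) - c * (n : ℝ) ^ γ⌉₊ n, ∏ i ∈ Finset.Icc 1 m,
            (1 - ((k n : ℝ) + δ) / ((j : ℝ) * (2 * m + δ) - 2 * m + (i : ℝ) - 1))) /
          (c * m * (n : ℝ) ^ (γ - 1) * ((k n : ℝ) + δ) / (2 * m + δ)))
      atTop (nhds 1) := by
  have hm1 : (1:ℝ) ≤ (m:ℝ) := by exact_mod_cast hm
  have hM0 : (0:ℝ) < 2 * (m:ℝ) + δ := by linarith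
  have hKpos : ∀ n, (0:ℝ) < (k n : ℝ) + δ := by
    intro n
    have h1 : (m:ℝ) ≤ (k n : ℝ) := by exact_mod_cast hk n
    linarith
  set lo : ℕ → ℝ := fun n => ((n:ℝ) - c * (n:ℝ) ^ γ) * (2 * (m:ℝ) + δ) + δ with hlodef
  set S : ℕ → ℝ := fun n => ∑ j ∈ Finset.Ioc ⌈(n : ℝ) - c * (n : ℝ) ^ γ⌉₊ n,
      ∑ i ∈ Finset.Icc 1 m,
      ((k n : ℝ) + δ) / ((j : ℝ) * (2 * (m:ℝ) + δ) - 2 * (m:ℝ) + (i : ℝ) - 1) with hSdef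
  set D : ℕ → ℝ := fun n => c * (m:ℝ) * (n : ℝ) ^ (γ - 1) * ((k n : ℝ) + δ) / (2 * (m:ℝ) + δ)
    with hDdef
  set P : ℕ → ℝ := fun n => ∏ j ∈ Finset.Ioc ⌈(n : ℝ) - c * (n : ℝ) ^ γ⌉₊ n,
      ∏ i ∈ Finset.Icc 1 m,
      (1 - ((k n : ℝ) + δ) / ((j : ℝ) * (2 * (m:ℝ) + δ) - 2 * (m:ℝ) + (i : ℝ) - 1)) with hPdef
  show Tendsto (fun n : ℕ => (1 - P n) / D n) atTop (nhds 1)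
  have hcast : Tendsto (fun n : ℕ => (n:ℝ)) atTop atTop := tendsto_natCast_atTop_atTop
  have hnpos : ∀ n : ℕ, 1 ≤ n → (0:ℝ) < (n:ℝ) := fun n hn => by
    exact_mod_cast Nat.lt_of_lt_of_le Nat.zero_lt_one hn
  have hninv : Tendsto (fun n : ℕ => ((n:ℝ))⁻¹) atTop (nhds 0) :=
    tendsto_inv_atTop_zero.comp hcast
  have hrg : Tendsto (fun n : ℕ => (n:ℝ) ^ (γ - 1)) atTop (nhds 0) := by
    have h1 : Tendsto (fun x : ℝ => x ^ (-(1 - γ))) atTop (nhds 0) :=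
      tendsto_rpow_neg_atTop (by linarith)
    have h2 := h1.comp hcast
    simpa [Function.comp_def, neg_sub] using h2
  have hsplit : ∀ n : ℕ, 1 ≤ n → (n:ℝ) ^ (γ - 1) = (n:ℝ) ^ γ / (n:ℝ) := by
    intro n hn
    rw [Real.rpow_sub (hnpos n hn), Real.rpow_one]
  have hcg : Tendsto (fun n : ℕ => c * (n:ℝ) ^ γ) atTop atTop := by
    apply Tendsto.const_mul_atTop hc
    exact (tendsto_rpow_atTop hγ0).comp hcast
  have hcginv : Tendsto (fun n : ℕ => (c * (n:ℝ) ^ γ)⁻¹) atTop (nhds 0) := by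
    exact hcg.inv_tendsto_atTop
  have hone : Tendsto (fun n : ℕ => 1 - c * (n:ℝ) ^ (γ - 1)) atTop (nhds 1) := by
    simpa using (hrg.const_mul c).const_sub 1
  have ht : Tendsto (fun n : ℕ => (n:ℝ) - c * (n:ℝ) ^ γ) atTop atTop := by
    have h2 := hcast.atTop_mul_pos one_pos hone
    apply h2.congr'
    filter_upwards [eventually_ge_atTop 1] with n hn
    have hp := hnpos n hn
    rw [hsplit n hn]
    field_simp
  have hlo_top : Tendsto lo atTop atTop := by
    rw [hlodef]
    apply tendsto_atTop_add_const_right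
    exact ht.atTop_mul_const hM0
  have hrk : Tendsto (fun n : ℕ => (n:ℝ) ^ (γ - 1) * ((k n : ℝ) + δ)) atTop (nhds 0) := by
    have h1 : Tendsto (fun n : ℕ => (k n : ℝ) / (n:ℝ) ^ (1 - γ) + (n:ℝ) ^ (γ - 1) * δ)
        atTop (nhds 0) := by
      have h := hko.tendsto_div_nhds_zero.add (hrg.mul_const δ)
      simpa using h
    apply h1.congr
    intro n
    rw [div_eq_mul_inv, ← Real.rpow_neg (Nat.cast_nonneg n), neg_sub]
    ring
  have hD0 : Tendsto D atTop (nhds 0) := by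
    rw [hDdef]
    have h1 := (hrk.const_mul (c * (m:ℝ))).div_const (2 * (m:ℝ) + δ)
    have h2 : Tendsto (fun n : ℕ => c * (m:ℝ) * ((n:ℝ) ^ (γ - 1) * ((k n : ℝ) + δ)) /
        (2 * (m:ℝ) + δ)) atTop (nhds 0) := by simpa using h1
    apply h2.congr
    intro n
    ring
  have hkn2 : Tendsto (fun n : ℕ => ((k n : ℝ) + δ) * ((n:ℝ))⁻¹) atTop (nhds 0) := by
    have hbig : (fun n : ℕ => (n:ℝ) ^ (1 - γ)) =O[atTop] (fun n : ℕ => (n:ℝ)) := by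
      rw [isBigO_iff]
      refine ⟨1, ?_⟩
      filter_upwards [eventually_ge_atTop 1] with n hn
      have hp := hnpos n hn
      have h1 : (n:ℝ) ^ (1 - γ) ≤ (n:ℝ) ^ (1:ℝ) :=
        Real.rpow_le_rpow_of_exponent_le (by exact_mod_cast hn) (by linarith)
      rw [Real.rpow_one] at h1
      rw [Real.norm_eq_abs, Real.norm_eq_abs, abs_of_nonneg (Real.rpow_nonneg hp.le _),
        abs_of_nonneg hp.le]
      linarith
    have h1 := (hko.trans_isBigO hbig).tendsto_div_nhds_zero
    have h2 : Tendsto (fun n : ℕ => (k n : ℝ) / (n:ℝ) + δ * ((n:ℝ))⁻¹) atTop (nhds 0) := by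
      have h := h1.add (hninv.const_mul δ)
      simpa using h
    apply h2.congr
    intro n
    rw [div_eq_mul_inv]
    ring
  have hden : Tendsto (fun n : ℕ => (1 - c * (n:ℝ) ^ (γ - 1)) * (2 * (m:ℝ) + δ)
      + δ * ((n:ℝ))⁻¹) atTop (nhds (2 * (m:ℝ) + δ)) := by
    have h := (hone.mul_const (2 * (m:ℝ) + δ)).add (hninv.const_mul δ)
    simpa using h
  have hloX : ∀ n : ℕ, 1 ≤ n → lo n =
      (n:ℝ) * ((1 - c * (n:ℝ) ^ (γ - 1)) * (2 * (m:ℝ) + δ) + δ * ((n:ℝ))⁻¹) := by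
    intro n hn
    have hp := hnpos n hn
    simp only [hlodef]
    rw [hsplit n hn]
    field_simp
  have hu : Tendsto (fun n : ℕ => (n:ℝ) * (2 * (m:ℝ) + δ) / lo n) atTop (nhds 1) := by
    have h2 := Tendsto.div
      (tendsto_const_nhds : Tendsto (fun _ : ℕ => 2 * (m:ℝ) + δ) atTop (nhds (2 * (m:ℝ) + δ)))
      hden hM0.ne'
    rw [div_self hM0.ne'] at h2
    apply h2.congr'
    filter_upwards [eventually_ge_atTop 1] with n hn
    simp only [Pi.div_apply]
    rw [hloX n hn, mul_div_mul_left _ _ (hnpos n hn).ne']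
  have hl : Tendsto (fun n : ℕ => 1 - (c * (n:ℝ) ^ γ)⁻¹) atTop (nhds 1) := by
    simpa using hcginv.const_sub 1
  have hKlo : ∀ᶠ n : ℕ in atTop, (k n : ℝ) + δ ≤ lo n := by
    filter_upwards [eventually_ge_atTop 1,
      hkn2.eventually (eventually_lt_nhds (by norm_num : (0:ℝ) < 1/2)),
      hden.eventually (eventually_gt_nhds (by linarith : (1/2:ℝ) < 2 * (m:ℝ) + δ))]
      with n hn h1 h2
    have hp := hnpos n hn
    have e1 : ((k n : ℝ) + δ) = ((k n : ℝ) + δ) * ((n:ℝ))⁻¹ * (n:ℝ) := by field_simp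
    rw [hloX n hn]
    nlinarith [mul_lt_mul_of_pos_right h1 hp, mul_lt_mul_of_pos_right h2 hp]
  -- the main per-n estimates
  have hper : ∀ᶠ n : ℕ in atTop, 0 < D n ∧
      (1 - (c * (n:ℝ) ^ γ)⁻¹) * D n ≤ S n ∧
      S n ≤ ((n:ℝ) * (2 * (m:ℝ) + δ) / lo n) * D n ∧
      0 ≤ S n ∧ 1 - S n ≤ P n ∧ P n ≤ Real.exp (-S n) := by
    filter_upwards [eventually_ge_atTop 1, ht.eventually_ge_atTop 0,
      hlo_top.eventually_ge_atTop 1, hKlo] with n hn ht0 hlo1 hKlo'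
    have hp := hnpos n hn
    have hKp := hKpos n
    have hlo0 : (0:ℝ) < lo n := lt_of_lt_of_le one_pos hlo1
    have hDpos : 0 < D n := by
      simp only [hDdef]
      have h1 : (0:ℝ) < (n:ℝ) ^ (γ - 1) := Real.rpow_pos_of_pos hp _
      have hmpos : (0:ℝ) < (m:ℝ) := by linarith
      exact div_pos (mul_pos (mul_pos (mul_pos hc hmpos) h1) hKp) hM0
    obtain ⟨A, hA⟩ : ∃ A : ℕ, ⌈(n : ℝ) - c * (n : ℝ) ^ γ⌉₊ = A := ⟨_, rfl⟩
    have hAle : A ≤ n := by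
      rw [← hA]
      apply Nat.ceil_le.2
      have h1 : (0:ℝ) ≤ c * (n:ℝ) ^ γ := by positivity
      linarith
    have hTle : ((n:ℝ) - c * (n:ℝ) ^ γ) ≤ (A:ℝ) := by rw [← hA]; exact Nat.le_ceil _
    have hTlt : (A:ℝ) < ((n:ℝ) - c * (n:ℝ) ^ γ) + 1 := by
      rw [← hA]; exact Nat.ceil_lt_add_one ht0
    have hterm : ∀ j ∈ Finset.Ioc A n, ∀ i ∈ Finset.Icc 1 m,
        lo n ≤ (j:ℝ) * (2 * (m:ℝ) + δ) - 2 * (m:ℝ) + (i:ℝ) - 1 ∧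
        (j:ℝ) * (2 * (m:ℝ) + δ) - 2 * (m:ℝ) + (i:ℝ) - 1 ≤ (n:ℝ) * (2 * (m:ℝ) + δ) := by
      intro j hj i hi
      rw [Finset.mem_Ioc] at hj
      rw [Finset.mem_Icc] at hi
      have hj1 : ((n:ℝ) - c * (n:ℝ) ^ γ) + 1 ≤ (j:ℝ) := by
        have h1 : (A:ℝ) + 1 ≤ (j:ℝ) := by exact_mod_cast hj.1
        linarith
      have hjn : (j:ℝ) ≤ (n:ℝ) := by exact_mod_cast hj.2
      have hi1 : (1:ℝ) ≤ (i:ℝ) := by exact_mod_cast hi.1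
      have him : (i:ℝ) ≤ (m:ℝ) := by exact_mod_cast hi.2
      constructor
      · simp only [hlodef]
        linarith [mul_le_mul_of_nonneg_right hj1 hM0.le]
      · linarith [mul_le_mul_of_nonneg_right hjn hM0.le]
    have hdpos : ∀ j ∈ Finset.Ioc A n, ∀ i ∈ Finset.Icc 1 m,
        (0:ℝ) < (j:ℝ) * (2 * (m:ℝ) + δ) - 2 * (m:ℝ) + (i:ℝ) - 1 :=
      fun j hj i hi => lt_of_lt_of_le hlo0 (hterm j hj i hi).1
    -- upper bound on S
    have hinner_up : ∀ j ∈ Finset.Ioc A n,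
        ∑ i ∈ Finset.Icc 1 m,
          ((k n : ℝ) + δ) / ((j:ℝ) * (2 * (m:ℝ) + δ) - 2 * (m:ℝ) + (i:ℝ) - 1)
          ≤ (m:ℝ) * (((k n : ℝ) + δ) / lo n) := by
      intro j hj
      have h1 : ∑ i ∈ Finset.Icc 1 m,
          ((k n : ℝ) + δ) / ((j:ℝ) * (2 * (m:ℝ) + δ) - 2 * (m:ℝ) + (i:ℝ) - 1)
          ≤ ∑ _i ∈ Finset.Icc 1 m, ((k n : ℝ) + δ) / lo n := by
        refine Finset.sum_le_sum fun i hi => ?_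
        have hd0 := hdpos j hj i hi
        have hle := (hterm j hj i hi).1
        gcongr
      simpa [Finset.sum_const, Nat.card_Icc, nsmul_eq_mul, mul_comm] using h1
    have hSup : S n ≤ ((n - A : ℕ):ℝ) * ((m:ℝ) * (((k n : ℝ) + δ) / lo n)) := by
      have h1 : S n ≤ ∑ _j ∈ Finset.Ioc A n, (m:ℝ) * (((k n : ℝ) + δ) / lo n) := by
        simp only [hSdef]
        rw [hA]
        exact Finset.sum_le_sum hinner_up
      simpa [Finset.sum_const, Nat.card_Ioc, nsmul_eq_mul] using h1
    -- lower bound on S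
    have hinner_lo : ∀ j ∈ Finset.Ioc A n,
        (m:ℝ) * (((k n : ℝ) + δ) / ((n:ℝ) * (2 * (m:ℝ) + δ)))
          ≤ ∑ i ∈ Finset.Icc 1 m,
          ((k n : ℝ) + δ) / ((j:ℝ) * (2 * (m:ℝ) + δ) - 2 * (m:ℝ) + (i:ℝ) - 1) := by
      intro j hj
      have h1 : ∑ _i ∈ Finset.Icc 1 m, ((k n : ℝ) + δ) / ((n:ℝ) * (2 * (m:ℝ) + δ))
          ≤ ∑ i ∈ Finset.Icc 1 m,
          ((k n : ℝ) + δ) / ((j:ℝ) * (2 * (m:ℝ) + δ) - 2 * (m:ℝ) + (i:ℝ) - 1) := by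
        refine Finset.sum_le_sum fun i hi => ?_
        have hd0 := hdpos j hj i hi
        have hle := (hterm j hj i hi).2
        gcongr
      simpa [Finset.sum_const, Nat.card_Icc, nsmul_eq_mul, mul_comm] using h1
    have hSlo : ((n - A : ℕ):ℝ) * ((m:ℝ) * (((k n : ℝ) + δ) / ((n:ℝ) * (2 * (m:ℝ) + δ))))
        ≤ S n := by
      have h1 : ∑ _j ∈ Finset.Ioc A n, (m:ℝ) * (((k n : ℝ) + δ) / ((n:ℝ) * (2 * (m:ℝ) + δ)))
          ≤ S n := by
        simp only [hSdef]
        rw [hA]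
        exact Finset.sum_le_sum hinner_lo
      simpa [Finset.sum_const, Nat.card_Ioc, nsmul_eq_mul] using h1
    have hNcast : ((n - A : ℕ):ℝ) = (n:ℝ) - (A:ℝ) := Nat.cast_sub hAle
    have hN1 : c * (n:ℝ) ^ γ - 1 ≤ ((n - A : ℕ):ℝ) := by rw [hNcast]; linarith
    have hN2 : ((n - A : ℕ):ℝ) ≤ c * (n:ℝ) ^ γ := by rw [hNcast]; linarith
    have hker_up : (0:ℝ) ≤ (m:ℝ) * (((k n : ℝ) + δ) / lo n) :=
      mul_nonneg (Nat.cast_nonneg m) (div_nonneg hKp.le hlo0.le)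
    have hker_lo : (0:ℝ) ≤ (m:ℝ) * (((k n : ℝ) + δ) / ((n:ℝ) * (2 * (m:ℝ) + δ))) :=
      mul_nonneg (Nat.cast_nonneg m) (div_nonneg hKp.le (mul_pos hp hM0).le)
    have hS_up2 : S n ≤ (c * (n:ℝ) ^ γ) * ((m:ℝ) * (((k n : ℝ) + δ) / lo n)) :=
      le_trans hSup (mul_le_mul_of_nonneg_right hN2 hker_up)
    have hS_lo2 : (c * (n:ℝ) ^ γ - 1) * ((m:ℝ) * (((k n : ℝ) + δ) / ((n:ℝ) * (2 * (m:ℝ) + δ))))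
        ≤ S n := le_trans (mul_le_mul_of_nonneg_right hN1 hker_lo) hSlo
    have hnne : (n:ℝ) ≠ 0 := hp.ne'
    have hgne : (n:ℝ) ^ γ ≠ 0 := (Real.rpow_pos_of_pos hp γ).ne'
    have hcne : c ≠ 0 := hc.ne'
    have hMne : (2 * (m:ℝ) + δ) ≠ 0 := hM0.ne'
    have hlone : lo n ≠ 0 := hlo0.ne'
    have hEq1 : (c * (n:ℝ) ^ γ - 1) * ((m:ℝ) * (((k n : ℝ) + δ) / ((n:ℝ) * (2 * (m:ℝ) + δ))))
        = (1 - (c * (n:ℝ) ^ γ)⁻¹) * D n := by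
      simp only [hDdef]
      rw [hsplit n hn]
      field_simp
    have hEq2 : (c * (n:ℝ) ^ γ) * ((m:ℝ) * (((k n : ℝ) + δ) / lo n))
        = ((n:ℝ) * (2 * (m:ℝ) + δ) / lo n) * D n := by
      simp only [hDdef]
      rw [hsplit n hn]
      field_simp
      ring_nf
      rw [← mul_inv_cancel₀ hMne]
      ring
    -- Weierstrass and exponential bounds
    have hx0 : ∀ j ∈ Finset.Ioc A n, ∀ i ∈ Finset.Icc 1 m,
        0 ≤ ((k n : ℝ) + δ) / ((j:ℝ) * (2 * (m:ℝ) + δ) - 2 * (m:ℝ) + (i:ℝ) - 1) :=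
      fun j hj i hi => div_nonneg hKp.le (hdpos j hj i hi).le
    have hx1 : ∀ j ∈ Finset.Ioc A n, ∀ i ∈ Finset.Icc 1 m,
        ((k n : ℝ) + δ) / ((j:ℝ) * (2 * (m:ℝ) + δ) - 2 * (m:ℝ) + (i:ℝ) - 1) ≤ 1 := by
      intro j hj i hi
      rw [div_le_one (hdpos j hj i hi)]
      exact le_trans hKlo' (hterm j hj i hi).1
    have hW : 1 - S n ≤ P n := by
      simp only [hSdef, hPdef]
      rw [hA]
      exact weier2 (Finset.Ioc A n) (Finset.Icc 1 m)
        (fun j i => ((k n : ℝ) + δ) / ((j:ℝ) * (2 * (m:ℝ) + δ) - 2 * (m:ℝ) + (i:ℝ) - 1))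
        hx0 hx1
    have hSnn : 0 ≤ S n := by
      simp only [hSdef]
      rw [hA]
      exact Finset.sum_nonneg fun j hj => Finset.sum_nonneg fun i hi => hx0 j hj i hi
    have hPexp : P n ≤ Real.exp (-S n) := by
      simp only [hSdef, hPdef]
      rw [hA]
      exact prod_le_exp2 (Finset.Ioc A n) (Finset.Icc 1 m)
        (fun j i => ((k n : ℝ) + δ) / ((j:ℝ) * (2 * (m:ℝ) + δ) - 2 * (m:ℝ) + (i:ℝ) - 1)) hx1
    exact ⟨hDpos, by rw [← hEq1]; exact hS_lo2, by rw [← hEq2]; exact hS_up2, hSnn, hW, hPexp⟩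
  have hSD : Tendsto (fun n : ℕ => S n / D n) atTop (nhds 1) := by
    refine tendsto_of_tendsto_of_tendsto_of_le_of_le' hl hu ?_ ?_
    · filter_upwards [hper] with n hn
      exact (le_div_iff₀ hn.1).mpr hn.2.1
    · filter_upwards [hper] with n hn
      exact (div_le_iff₀ hn.1).mpr hn.2.2.1
  have hS0 : Tendsto S atTop (nhds 0) := by
    have h1 := hSD.mul hD0
    have h2 : Tendsto (fun n : ℕ => S n / D n * D n) atTop (nhds 0) := by simpa using h1
    apply h2.congr'
    filter_upwards [hper] with n hn
    rw [div_mul_cancel₀ _ hn.1.ne']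
  have hS1 : ∀ᶠ n : ℕ in atTop, S n ≤ 1 := hS0.eventually (eventually_le_nhds one_pos)
  have hLo : Tendsto (fun n : ℕ => S n / D n * (1 - 3/4 * S n)) atTop (nhds 1) := by
    simpa using hSD.mul ((hS0.const_mul (3/4)).const_sub 1)
  refine tendsto_of_tendsto_of_tendsto_of_le_of_le' hLo hSD ?_ ?_
  · filter_upwards [hper, hS1] with n hn hn1
    obtain ⟨hD, -, -, hSnn, -, hE⟩ := hn
    have hexp := exp_neg_le_quad hSnn hn1
    have h1 : S n - 3/4 * (S n)^2 ≤ 1 - P n := by nlinarith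
    calc S n / D n * (1 - 3/4 * S n) = (S n - 3/4 * (S n)^2) / D n := by ring
      _ ≤ (1 - P n) / D n := by gcongr
  · filter_upwards [hper] with n hn
    obtain ⟨hD, -, -, -, hW, -⟩ := hn
    have h1 : 1 - P n ≤ S n := by linarith
    gcongr
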